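/- Let (|h₀|², |h₁|²) have joint density f(y₁, y₂) = (1/((1−ρ²)σ₀²σ₁²)) exp(−(y₁/σ₀² + y₂/σ₁²)/(1−ρ²)) I₀(2ρ√(y₁y₂)/(σ₀σ₁(1−ρ²))) on (0,∞)², where 0 < ρ < 1 and I₀ is the modified Bessel function of the first kind. Then the density of X = |h₀|²/|h₁|² is f_X(x) = Σ_{m=0}^∞ C_{4m} x^m / (1 + x/ρ)^{2m+2} for x ≥ 0, where C_{4m} = (1−ρ²) ρ^{m−1} (2m+1)! / (m!)², under the normalization ρ = σ₀²/σ₁². -/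

import Mathlib

open Real MeasureTheory

/-- Modified Bessel function of the first kind of order zero, via its power series. -/
noncomputable def besselI0 (z : ℝ) : ℝ :=
  ∑' m : ℕ, (z / 2) ^ (2 * m) / ((m.factorial : ℝ)) ^ 2

lemma aux_integrableOn_pow_mul_exp (n : ℕ) {c : ℝ} (hc : 0 < c) :
    IntegrableOn (fun y : ℝ => y ^ n * Real.exp (-(c * y))) (Set.Ioi 0) := by
  have h0 : IntegrableOn (fun t : ℝ => t ^ n * Real.exp (-t)) (Set.Ioi 0) := by
    have h := Real.GammaIntegral_convergent (s := (n : ℝ) + 1) (by positivity)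
    refine h.congr_fun (fun t ht => ?_) measurableSet_Ioi
    rw [add_sub_cancel_right]; beta_reduce; rw [Real.rpow_natCast, mul_comm]
  have h1 : IntegrableOn (fun y : ℝ => (c * y) ^ n * Real.exp (-(c * y))) (Set.Ioi 0) := by
    have := (integrableOn_Ioi_comp_mul_left_iff
      (fun t : ℝ => t ^ n * Real.exp (-t)) 0 hc).mpr (by simpa using h0)
    simpa using this
  have h2 : IntegrableOn (fun y : ℝ => (c ^ n)⁻¹ * ((c * y) ^ n * Real.exp (-(c * y))))
      (Set.Ioi 0) := h1.const_mul _
  refine h2.congr_fun (fun y hy => ?_) measurableSet_Ioi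
  beta_reduce
  rw [mul_pow]
  field_simp

lemma aux_integral_pow_mul_exp (n : ℕ) {c : ℝ} (hc : 0 < c) :
    ∫ y in Set.Ioi (0:ℝ), y ^ n * Real.exp (-(c * y)) = (n.factorial : ℝ) / c ^ (n + 1) := by
  have h := Real.integral_rpow_mul_exp_neg_mul_Ioi (a := (n : ℝ) + 1) (by positivity) hc
  rw [add_sub_cancel_right] at h
  simp_rw [Real.rpow_natCast] at h
  rw [Real.Gamma_nat_eq_factorial] at h
  rw [show ((n : ℝ) + 1) = ((n + 1 : ℕ) : ℝ) by push_cast; ring, Real.rpow_natCast] at h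
  rw [h]
  rw [one_div, inv_pow]
  field_simp

set_option maxHeartbeats 1000000 in
/-- Density of the ratio `X = |h₀|²/|h₁|²` of two correlated exponential channel energies:
`f_X(x) = ∫₀^∞ y f(xy, y) dy = Σ_m C_{4m} x^m / (1 + x/ρ)^(2m+2)`. -/
theorem stmt17 (σ0 σ1 ρ : ℝ) (hσ0 : 0 < σ0) (hσ1 : 0 < σ1)
    (hρ : ρ = σ0 ^ 2 / σ1 ^ 2) (hρ0 : 0 < ρ) (hρ1 : ρ < 1)
    (f : ℝ → ℝ → ℝ)
    (hf : ∀ y1 y2, f y1 y2 = (1 / ((1 - ρ ^ 2) * σ0 ^ 2 * σ1 ^ 2)) *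
      Real.exp (-(y1 / σ0 ^ 2 + y2 / σ1 ^ 2) / (1 - ρ ^ 2)) *
      besselI0 (2 * ρ * Real.sqrt (y1 * y2) / (σ0 * σ1 * (1 - ρ ^ 2))))
    (C : ℕ → ℝ)
    (hC : ∀ m, C m = (1 - ρ ^ 2) * ρ ^ ((m : ℤ) - 1) * ((2 * m + 1).factorial : ℝ) /
      ((m.factorial : ℝ)) ^ 2)
    (x : ℝ) (hx : 0 ≤ x) :
    (∫ y in Set.Ioi (0:ℝ), y * f (x * y) y) =
      ∑' m : ℕ, C m * x ^ m / (1 + x / ρ) ^ (2 * m + 2) := by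
  have ha : 0 < 1 - ρ ^ 2 := by nlinarith
  set a : ℝ := 1 - ρ ^ 2 with ha_def
  have hs0 : (0:ℝ) < σ0 ^ 2 := by positivity
  have hs1 : (0:ℝ) < σ1 ^ 2 := by positivity
  have hρs : ρ * σ1 ^ 2 = σ0 ^ 2 := by rw [hρ]; field_simp
  set D : ℝ := 1 + x / ρ with hD_def
  have hD0 : 0 < D := by rw [hD_def]; positivity
  have hρD : ρ * D = ρ + x := by rw [hD_def]; field_simp
  set c : ℝ := (x / σ0 ^ 2 + 1 / σ1 ^ 2) / a with hc_def
  have hc : 0 < c := by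
    apply div_pos _ ha
    exact add_pos_of_nonneg_of_pos (div_nonneg hx hs0.le) (div_pos one_pos hs1)
  have hcD : c = D / (σ1 ^ 2 * a) := by
    rw [hc_def, hD_def, ← hρs]
    field_simp
    ring
  set β : ℝ := ρ * Real.sqrt x / (σ0 * σ1 * a) with hβ_def
  have hβ0 : 0 ≤ β := by rw [hβ_def]; positivity
  set A : ℝ := 1 / (a * σ0 ^ 2 * σ1 ^ 2) with hA_def
  have hA0 : 0 < A := by rw [hA_def]; positivity
  clear_value A β c D a
  -- key algebraic identities
  have hβc : β ^ 2 = (ρ * x / D ^ 2) * c ^ 2 := by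
    rw [hβ_def, hcD, div_pow, div_pow, mul_pow, mul_pow, mul_pow, Real.sq_sqrt hx, ← hρs]
    field_simp
  have hAc : A = (a / (ρ * D ^ 2)) * c ^ 2 := by
    rw [hA_def, hcD, div_pow, mul_pow, ← hρs]
    field_simp
  -- value of each term's integral
  have key : ∀ m : ℕ, A * (β ^ (2 * m) / ((m.factorial : ℝ)) ^ 2) *
      (((2 * m + 1).factorial : ℝ) / c ^ (2 * m + 2)) =
      C m * x ^ m / D ^ (2 * m + 2) := by
    intro m
    have hm : ((m.factorial : ℝ)) ≠ 0 := Nat.cast_ne_zero.mpr m.factorial_ne_zero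
    rw [hC m, zpow_sub_one₀ hρ0.ne', zpow_natCast]
    rw [pow_mul β 2 m, pow_add c (2*m) 2, pow_mul c 2 m, pow_add D (2*m) 2, pow_mul D 2 m]
    rw [hβc, hAc, mul_pow, div_pow]
    field_simp
    ring
  -- pointwise expansion of the integrand as a series
  have hpt : Set.EqOn (fun y => y * f (x * y) y)
      (fun y => ∑' m : ℕ, A * (β ^ (2 * m) / ((m.factorial : ℝ)) ^ 2) *
        (y ^ (2 * m + 1) * Real.exp (-(c * y)))) (Set.Ioi 0) := by
    intro y hy
    have hy0 : 0 < y := hy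
    simp only
    rw [hf, besselI0]
    have hsq : Real.sqrt (x * y * y) = Real.sqrt x * y := by
      rw [mul_assoc, Real.sqrt_mul hx, Real.sqrt_mul_self hy0.le]
    rw [hsq]
    have hexp : -(x * y / σ0 ^ 2 + y / σ1 ^ 2) / a = -(c * y) := by
      rw [hc_def]; field_simp
    rw [hexp]
    have hz : 2 * ρ * (Real.sqrt x * y) / (σ0 * σ1 * a) / 2 = β * y := by
      rw [hβ_def]; ring
    rw [hz, ← tsum_mul_left, ← tsum_mul_left]
    refine tsum_congr fun m => ?_
    rw [mul_pow]
    ring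
  rw [setIntegral_congr_fun measurableSet_Ioi hpt]
  -- measurability and integrability of the terms
  have hmeas : ∀ m : ℕ, AEStronglyMeasurable
      (fun y : ℝ => A * (β ^ (2 * m) / ((m.factorial : ℝ)) ^ 2) *
        (y ^ (2 * m + 1) * Real.exp (-(c * y)))) (volume.restrict (Set.Ioi 0)) := by
    intro m
    exact (Continuous.aestronglyMeasurable (by fun_prop)).restrict
  have hint : ∀ m : ℕ, IntegrableOn
      (fun y : ℝ => A * (β ^ (2 * m) / ((m.factorial : ℝ)) ^ 2) *
        (y ^ (2 * m + 1) * Real.exp (-(c * y)))) (Set.Ioi 0) :=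
    fun m => (aux_integrableOn_pow_mul_exp (2 * m + 1) hc).const_mul _
  have hval : ∀ m : ℕ, (∫ y in Set.Ioi (0:ℝ),
      A * (β ^ (2 * m) / ((m.factorial : ℝ)) ^ 2) * (y ^ (2 * m + 1) * Real.exp (-(c * y)))) =
      C m * x ^ m / D ^ (2 * m + 2) := by
    intro m
    rw [integral_const_mul, aux_integral_pow_mul_exp (2 * m + 1) hc,
      show 2 * m + 1 + 1 = 2 * m + 2 by ring, key m]
  -- nonnegativity of the sum terms
  have hCnn : ∀ m : ℕ, 0 ≤ C m := fun m => by rw [hC m]; positivity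
  have hwnn : ∀ m : ℕ, 0 ≤ C m * x ^ m / D ^ (2 * m + 2) := fun m => by
    exact div_nonneg (mul_nonneg (hCnn m) (pow_nonneg hx m)) (by positivity)
  -- summability of the sum
  have hw : ∀ m : ℕ, C m * x ^ m / D ^ (2 * m + 2) =
      (a / (ρ * D ^ 2)) * ((((2 * m + 1).factorial : ℝ)) / ((m.factorial : ℝ)) ^ 2 *
        (ρ * x / D ^ 2) ^ m) := by
    intro m
    have hm : ((m.factorial : ℝ)) ≠ 0 := Nat.cast_ne_zero.mpr m.factorial_ne_zero
    rw [hC m, zpow_sub_one₀ hρ0.ne', zpow_natCast, pow_add D (2*m) 2, pow_mul D 2 m,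
      div_pow, mul_pow]
    field_simp
  have hr2 : ρ ^ 2 < 1 := by nlinarith
  have hfacb : ∀ m : ℕ, (((2 * m + 1).factorial : ℝ)) / ((m.factorial : ℝ)) ^ 2 ≤
      (2 * (m:ℝ) + 1) * 4 ^ m := by
    intro m
    have hnat : (2 * m + 1).factorial ≤ (2 * m + 1) * 4 ^ m * (m.factorial * m.factorial) := by
      have h1 : (2 * m).factorial = (2 * m).choose m * (m.factorial * m.factorial) := by
        have := Nat.choose_mul_factorial_mul_factorial (show m ≤ 2 * m by omega)
        rw [show 2 * m - m = m by omega] at this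
        rw [← this]; ring
      have h2 : (2 * m).choose m ≤ 4 ^ m :=
        le_trans (Nat.choose_le_choose m (by omega : 2 * m ≤ 2 * m + 1))
          (Nat.choose_middle_le_pow m)
      calc (2 * m + 1).factorial = (2 * m + 1) * (2 * m).factorial := Nat.factorial_succ _
        _ = (2 * m + 1) * ((2 * m).choose m * (m.factorial * m.factorial)) := by rw [h1]
        _ ≤ (2 * m + 1) * (4 ^ m * (m.factorial * m.factorial)) := by
            exact Nat.mul_le_mul_left _ (Nat.mul_le_mul_right _ h2)
        _ = (2 * m + 1) * 4 ^ m * (m.factorial * m.factorial) := by ring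
    have hmpos : (0:ℝ) < ((m.factorial : ℝ)) ^ 2 := by positivity
    rw [div_le_iff₀ hmpos]
    have := (Nat.cast_le (α := ℝ)).mpr hnat
    push_cast at this
    calc (((2 * m + 1).factorial : ℝ)) ≤ (2 * (m:ℝ) + 1) * 4 ^ m * ((m.factorial : ℝ) * (m.factorial : ℝ)) := this
      _ = (2 * (m:ℝ) + 1) * 4 ^ m * ((m.factorial : ℝ)) ^ 2 := by ring
  have hratio : ρ * x / D ^ 2 ≤ ρ ^ 2 / 4 := by
    rw [div_le_div_iff₀ (by positivity) (by norm_num)]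
    have hsq : ρ ^ 2 * D ^ 2 = (ρ + x) ^ 2 := by rw [← hρD]; ring
    nlinarith [sq_nonneg (ρ - x)]
  have hratio0 : 0 ≤ ρ * x / D ^ 2 := by positivity
  have hwsum : Summable (fun m : ℕ => C m * x ^ m / D ^ (2 * m + 2)) := by
    have s1 : Summable (fun m : ℕ => (m:ℝ) * (ρ ^ 2) ^ m) := by
      simpa using summable_pow_mul_geometric_of_norm_lt_one 1
        (r := ρ ^ 2) (by rw [Real.norm_eq_abs, abs_of_pos (by positivity)]; exact hr2)
    have s2 : Summable (fun m : ℕ => (ρ ^ 2) ^ m) :=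
      summable_geometric_of_lt_one (by positivity) hr2
    have s3 : Summable (fun m : ℕ => (a / (ρ * D ^ 2)) *
        ((2 * (m:ℝ) + 1) * (ρ ^ 2) ^ m)) := by
      have heq : (fun m : ℕ => (2 * (m:ℝ) + 1) * (ρ ^ 2) ^ m) =
          (fun m : ℕ => 2 * ((m:ℝ) * (ρ ^ 2) ^ m) + (ρ ^ 2) ^ m) := funext fun m => by ring
      exact (heq ▸ ((s1.mul_left 2).add s2)).mul_left _
    refine Summable.of_nonneg_of_le hwnn (fun m => ?_) s3
    rw [hw m]
    have hM : 0 ≤ a / (ρ * D ^ 2) := by positivity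
    refine mul_le_mul_of_nonneg_left ?_ hM
    have h2 : (ρ * x / D ^ 2) ^ m ≤ (ρ ^ 2 / 4) ^ m := pow_le_pow_left₀ hratio0 hratio m
    have h3 : (0:ℝ) ≤ (ρ * x / D ^ 2) ^ m := pow_nonneg hratio0 m
    have h4 : (0:ℝ) ≤ (2 * (m:ℝ) + 1) * 4 ^ m := by positivity
    calc (((2 * m + 1).factorial : ℝ)) / ((m.factorial : ℝ)) ^ 2 * (ρ * x / D ^ 2) ^ m
        ≤ ((2 * (m:ℝ) + 1) * 4 ^ m) * (ρ ^ 2 / 4) ^ m := mul_le_mul (hfacb m) h2 h3 h4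
      _ = (2 * (m:ℝ) + 1) * (ρ ^ 2) ^ m := by
          rw [mul_assoc, ← mul_pow, show (4:ℝ) * (ρ ^ 2 / 4) = ρ ^ 2 by ring]
  -- finiteness of the lintegral sum
  have hfin : (∑' m : ℕ, ∫⁻ y in Set.Ioi (0:ℝ),
      ‖A * (β ^ (2 * m) / ((m.factorial : ℝ)) ^ 2) *
        (y ^ (2 * m + 1) * Real.exp (-(c * y)))‖₊) ≠ ⊤ := by
    have hlint : ∀ m : ℕ, (∫⁻ y in Set.Ioi (0:ℝ),
        ‖A * (β ^ (2 * m) / ((m.factorial : ℝ)) ^ 2) *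
          (y ^ (2 * m + 1) * Real.exp (-(c * y)))‖₊) =
        ENNReal.ofReal (C m * x ^ m / D ^ (2 * m + 2)) := by
      intro m
      have hKnn : 0 ≤ A * (β ^ (2 * m) / ((m.factorial : ℝ)) ^ 2) := by positivity
      have hnnae : 0 ≤ᵐ[volume.restrict (Set.Ioi (0:ℝ))]
          (fun y : ℝ => A * (β ^ (2 * m) / ((m.factorial : ℝ)) ^ 2) *
            (y ^ (2 * m + 1) * Real.exp (-(c * y)))) := by
        refine (ae_restrict_iff' measurableSet_Ioi).mpr (Filter.Eventually.of_forall fun y hy => ?_)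
        exact mul_nonneg hKnn (mul_nonneg (pow_nonneg (le_of_lt hy) _) (Real.exp_nonneg _))
      rw [← hval m, ofReal_integral_eq_lintegral_ofReal (hint m) hnnae]
      refine lintegral_congr_ae ?_
      filter_upwards [hnnae] with y hy
      exact Real.enorm_eq_ofReal hy
    rw [tsum_congr hlint, ← ENNReal.ofReal_tsum_of_nonneg hwnn hwsum]
    exact ENNReal.ofReal_ne_top
  rw [integral_tsum hmeas hfin]
  exact tsum_congr hval
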